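/- Let h > 0 and let φ : ℝ → ℝ be continuously differentiable on a neighborhood of [−h, 0]. Then ∫_{−h}^{0} φ(z)⁶ dz ≤ 2h·φ(0)⁶ + 9h²·∫_{−h}^{0} φ(z)⁴ φ′(z)² dz. -/

import Mathlib

open MeasureTheory intervalIntegral

lemma cs_aux {a b : ℝ} (hab : a ≤ b) {f : ℝ → ℝ}
    (hf : IntegrableOn f (Set.Ioc a b))
    (hf2 : IntegrableOn (fun x => f x ^ 2) (Set.Ioc a b)) :
    (∫ x in Set.Ioc a b, f x) ^ 2 ≤ (b - a) * ∫ x in Set.Ioc a b, f x ^ 2 := by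
  set μ := volume.restrict (Set.Ioc a b) with hμ
  set c : ℝ := b - a with hc
  set I : ℝ := ∫ x, f x ∂μ with hI
  have hμuniv : (μ Set.univ).toReal = c := by
    simp [hμ, hc, Real.volume_Ioc, ENNReal.toReal_ofReal (by linarith : (0:ℝ) ≤ b - a)]
  have hconst : ∫ _ : ℝ, (1:ℝ) ∂μ = c := by
    simp [Measure.real, hμuniv]
  have hexp : ∫ x, (c * f x - I) ^ 2 ∂μ
      = c ^ 2 * (∫ x, f x ^ 2 ∂μ) - c * I ^ 2 := by
    have h1 : ∀ x, (c * f x - I) ^ 2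
        = c ^ 2 * f x ^ 2 - (2 * c * I) * f x + I ^ 2 * 1 := by intro x; ring
    simp_rw [h1]
    rw [MeasureTheory.integral_add, MeasureTheory.integral_sub, MeasureTheory.integral_const_mul, MeasureTheory.integral_const_mul,
      MeasureTheory.integral_const_mul, hconst]
    · ring
    · exact hf2.const_mul _
    · exact hf.const_mul _
    · exact (hf2.const_mul _).sub (hf.const_mul _)
    · exact (integrable_const _).const_mul _
  have hpos : 0 ≤ ∫ x, (c * f x - I) ^ 2 ∂μ :=
    integral_nonneg (fun x => sq_nonneg _)
  rw [hexp] at hpos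
  rcases eq_or_lt_of_le hab with rfl | hab'
  · have : I = 0 := by simp [hI, hμ]
    simp [this, hc]
  · have hc0 : 0 < c := by simp [hc]; linarith
    nlinarith [hpos]

/-- One-dimensional `L⁶` Poincaré-type inequality (P-6):
for `φ` continuously differentiable on a neighborhood of `[-h, 0]`,
`∫_{-h}^0 φ⁶ ≤ 2h φ(0)⁶ + 9h² ∫_{-h}^0 φ⁴ (φ')²`. -/
theorem stmt_2 (h : ℝ) (hh : 0 < h) (φ : ℝ → ℝ) (U : Set ℝ) (hU : IsOpen U)
    (hUsub : Set.Icc (-h) 0 ⊆ U) (hφ : ContDiffOn ℝ 1 φ U) :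
    (∫ z in (-h)..0, (φ z) ^ 6) ≤
      2 * h * (φ 0) ^ 6 + 9 * h ^ 2 * ∫ z in (-h)..0, (φ z) ^ 4 * (deriv φ z) ^ 2 := by
  have hφc : ContinuousOn φ U := hφ.continuousOn
  have hφd : ∀ x ∈ U, HasDerivAt φ (deriv φ x) x := by
    intro x hx
    have := (hφ.differentiableOn one_ne_zero).differentiableAt (hU.mem_nhds hx)
    exact this.hasDerivAt
  have hφ'c : ContinuousOn (deriv φ) U := by
    have := hφ.continuousOn_derivWithin hU.uniqueDiffOn le_rfl
    refine this.congr ?_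
    intro x hx
    exact ((hφd x hx).hasDerivWithinAt.derivWithin (hU.uniqueDiffOn x hx)).symm
  -- G = derivative of φ³
  set G : ℝ → ℝ := fun s => 3 * φ s ^ 2 * deriv φ s with hG
  have hGc : ContinuousOn G U :=
    ((continuousOn_const.mul (hφc.pow 2)).mul hφ'c)
  have hGd : ∀ x ∈ U, HasDerivAt (fun s => φ s ^ 3) (G x) x := by
    intro x hx
    have := (hφd x hx).fun_pow 3
    simpa [hG, mul_comm, mul_assoc, mul_left_comm] using this
  have hIccU : ∀ {z : ℝ}, z ∈ Set.Icc (-h) 0 → Set.uIcc z 0 ⊆ U := by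
    intro z hz
    refine subset_trans ?_ hUsub
    rw [Set.uIcc_of_le hz.2]
    exact Set.Icc_subset_Icc hz.1 le_rfl
  have h0U : Set.uIcc (-h) 0 ⊆ U := hIccU (Set.mem_Icc.2 ⟨le_rfl, by linarith⟩)
  -- integrability of G² on Ioc (-h) 0
  have hG2int : IntegrableOn (fun s => G s ^ 2) (Set.Ioc (-h) 0) := by
    have : ContinuousOn (fun s => G s ^ 2) (Set.Icc (-h) 0) := (hGc.mono hUsub).pow 2
    exact this.integrableOn_Icc.mono_set Set.Ioc_subset_Icc_self
  set K : ℝ := ∫ s in Set.Ioc (-h) 0, G s ^ 2 with hK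
  have hK0 : 0 ≤ K := integral_nonneg fun s => sq_nonneg _
  -- FTC + Cauchy-Schwarz pointwise bound
  have key : ∀ z ∈ Set.Icc (-h) 0,
      φ z ^ 6 ≤ 2 * φ 0 ^ 6 + 2 * (-z) * K := by
    intro z hz
    have hsub := hIccU hz
    have hftc : ∫ s in z..0, G s = φ 0 ^ 3 - φ z ^ 3 := by
      have hint : IntervalIntegrable G volume z 0 := (hGc.mono hsub).intervalIntegrable
      exact intervalIntegral.integral_eq_sub_of_hasDerivAt
        (fun x hx => hGd x (hsub hx)) hint
    have hGint : IntegrableOn G (Set.Ioc z 0) := by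
      have h2 : IntervalIntegrable G volume z 0 := (hGc.mono hsub).intervalIntegrable
      rw [intervalIntegrable_iff_integrableOn_Ioc_of_le hz.2] at h2
      exact h2
    have hG2int' : IntegrableOn (fun s => G s ^ 2) (Set.Ioc z 0) :=
      hG2int.mono_set (Set.Ioc_subset_Ioc hz.1 le_rfl)
    have hcs : (∫ s in Set.Ioc z 0, G s) ^ 2 ≤ (0 - z) * ∫ s in Set.Ioc z 0, G s ^ 2 :=
      cs_aux hz.2 hGint hG2int'
    have hmono : ∫ s in Set.Ioc z 0, G s ^ 2 ≤ K := by
      apply setIntegral_mono_set hG2int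
      · exact Filter.Eventually.of_forall fun s => sq_nonneg _
      · exact Filter.Eventually.of_forall (Set.Ioc_subset_Ioc hz.1 le_rfl)
    have hIeq : ∫ s in z..0, G s = ∫ s in Set.Ioc z 0, G s :=
      intervalIntegral.integral_of_le hz.2
    have hb : (φ 0 ^ 3 - φ z ^ 3) ^ 2 ≤ (-z) * K := by
      rw [← hftc, hIeq]
      calc (∫ s in Set.Ioc z 0, G s) ^ 2 ≤ (0 - z) * ∫ s in Set.Ioc z 0, G s ^ 2 := hcs
        _ ≤ (-z) * K := by
            rw [zero_sub]
            exact mul_le_mul_of_nonneg_left hmono (by linarith [hz.2])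
    nlinarith [hb, sq_nonneg (2 * φ 0 ^ 3 - φ z ^ 3)]
  -- integrate the pointwise bound
  have hlhs_int : IntervalIntegrable (fun z => φ z ^ 6) volume (-h) 0 :=
    ((hφc.mono h0U).pow 6).intervalIntegrable
  have hrhs_int : IntervalIntegrable (fun z => 2 * φ 0 ^ 6 + 2 * (-z) * K) volume (-h) 0 :=
    (Continuous.intervalIntegrable (by continuity) _ _)
  have hstep : (∫ z in (-h)..0, φ z ^ 6)
      ≤ ∫ z in (-h)..0, (2 * φ 0 ^ 6 + 2 * (-z) * K) := by
    apply intervalIntegral.integral_mono_on (by linarith) hlhs_int hrhs_int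
    exact key
  have hcomp : (∫ z in (-h)..0, (2 * φ 0 ^ 6 + 2 * (-z) * K))
      = 2 * h * φ 0 ^ 6 + h ^ 2 * K := by
    have : (fun z : ℝ => 2 * φ 0 ^ 6 + 2 * (-z) * K) =
        fun z : ℝ => 2 * φ 0 ^ 6 + (-2 * K) * z := by funext z; ring
    rw [this, intervalIntegral.integral_add (intervalIntegrable_const)
      ((continuous_const_mul (-2 * K)).intervalIntegrable _ _),
      intervalIntegral.integral_const, intervalIntegral.integral_const_mul,
      integral_id]
    simp only [smul_eq_mul]
    ring
  -- relate K to the stated integral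
  have hKeq : h ^ 2 * K = 9 * h ^ 2 * ∫ z in (-h)..0, φ z ^ 4 * deriv φ z ^ 2 := by
    have h1 : K = ∫ z in (-h)..0, G z ^ 2 := (intervalIntegral.integral_of_le (by linarith)).symm
    have h2 : (∫ z in (-h)..0, G z ^ 2) = ∫ z in (-h)..0, 9 * (φ z ^ 4 * deriv φ z ^ 2) := by
      apply intervalIntegral.integral_congr
      intro z hz
      simp only [hG]
      ring
    rw [h1, h2, intervalIntegral.integral_const_mul]
    ring
  calc (∫ z in (-h)..0, φ z ^ 6) ≤ _ := hstep
    _ = 2 * h * φ 0 ^ 6 + h ^ 2 * K := hcomp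
    _ = _ := by rw [hKeq]
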